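/- Let A be an n×n complex matrix, u, v ∈ ℂⁿ, let m_A denote the minimal polynomial of A of degree l, and let p_{uv} be the polynomial satisfying p_{uv}(λ) = v* m_A(λ)(λIₙ − A)⁻¹u for λ outside the spectrum of A. Suppose there exists κ ∈ {0,…,l−1} with v*u = ⋯ = v*A^{κ−1}u = 0 and v*A^{κ}u ≠ 0. Then the degree of p_{uv} is exactly l − κ − 1, and its leading coefficient equals v*A^{κ}u. -/

import Mathlib

open Matrix Polynomial Finset

theorem stmt7 {n : ℕ} (A : Matrix (Fin n) (Fin n) ℂ) (u v : Fin n → ℂ)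
    (p : Polynomial ℂ)
    (hp : ∀ lam ∉ spectrum ℂ A,
      p.eval lam = (minpoly ℂ A).eval lam *
        (star v ⬝ᵥ (lam • (1 : Matrix (Fin n) (Fin n) ℂ) - A)⁻¹.mulVec u))
    (κ : ℕ) (hκ : κ < (minpoly ℂ A).natDegree)
    (h0 : ∀ j < κ, star v ⬝ᵥ (A ^ j).mulVec u = 0)
    (hκ0 : star v ⬝ᵥ (A ^ κ).mulVec u ≠ 0) :
    p.natDegree = (minpoly ℂ A).natDegree - κ - 1 ∧
      p.leadingCoeff = star v ⬝ᵥ (A ^ κ).mulVec u := by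
  classical
  set m := minpoly ℂ A with hm
  set l := m.natDegree with hl
  have hA : IsIntegral ℂ A := Algebra.IsIntegral.isIntegral A
  have hm0 : m ≠ 0 := minpoly.ne_zero hA
  have hmo : m.Monic := minpoly.monic hA
  set φ : Matrix (Fin n) (Fin n) ℂ →ₗ[ℂ] ℂ :=
    { toFun := fun M => star v ⬝ᵥ M.mulVec u
      map_add' := fun M N => by simp [Matrix.add_mulVec, dotProduct_add]
      map_smul' := fun r M => by
        simp [Matrix.smul_mulVec, dotProduct_smul, smul_eq_mul] } with hφ
  set c : ℕ → ℂ := fun j => φ (A ^ j) with hc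
  have h0c : ∀ j < κ, c j = 0 := fun j hj => h0 j hj
  have hκ0c : c κ ≠ 0 := hκ0
  set B : ℂ → Matrix (Fin n) (Fin n) ℂ := fun lam =>
    ∑ j ∈ Finset.range (l+1), m.coeff j •
      ∑ i ∈ Finset.range j, lam ^ i • A ^ (j-1-i) with hB
  have key : ∀ lam : ℂ, (lam • (1:Matrix (Fin n) (Fin n) ℂ) - A) * B lam
      = m.eval lam • 1 := by
    intro lam
    have hgeom : ∀ j : ℕ, (lam • (1:Matrix (Fin n) (Fin n) ℂ) - A) *
        (∑ i ∈ Finset.range j, lam ^ i • A ^ (j-1-i))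
        = lam ^ j • (1:Matrix (Fin n) (Fin n) ℂ) - A ^ j := by
      intro j
      have hcomm : Commute (lam • (1:Matrix (Fin n) (Fin n) ℂ)) A :=
        (Commute.one_left A).smul_left lam
      have := hcomm.mul_geom_sum₂ j
      have hrw : ∀ i k : ℕ, (lam • (1:Matrix (Fin n) (Fin n) ℂ)) ^ i * A ^ k
          = lam ^ i • A ^ k := by
        intro i k
        rw [_root_.smul_pow, one_pow, smul_mul_assoc, one_mul]
      simp only [hrw] at this
      rw [this, _root_.smul_pow, one_pow]
    rw [hB, Finset.mul_sum]
    simp only [mul_smul_comm, hgeom, smul_sub]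
    rw [Finset.sum_sub_distrib]
    have h1 : ∑ j ∈ Finset.range (l+1), m.coeff j • lam ^ j • (1:Matrix (Fin n) (Fin n) ℂ)
        = m.eval lam • 1 := by
      rw [eval_eq_sum_range, Finset.sum_smul]
      simp [smul_smul]
      rfl
    have h2 : ∑ j ∈ Finset.range (l+1), m.coeff j • A ^ j = 0 := by
      have := minpoly.aeval ℂ A
      rwa [aeval_eq_sum_range] at this
    rw [h1, h2, sub_zero]
  set q : ℂ[X] := ∑ j ∈ Finset.range (l+1), ∑ i ∈ Finset.range j,
      C (m.coeff j * c (j-1-i)) * X ^ i with hq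
  have hqeval : ∀ lam : ℂ, q.eval lam = star v ⬝ᵥ (B lam).mulVec u := by
    intro lam
    have hφB : star v ⬝ᵥ (B lam).mulVec u = φ (B lam) := rfl
    rw [hφB, hB]
    simp only [map_sum, _root_.map_smul, smul_eq_mul]
    rw [hq]
    simp only [eval_finset_sum, eval_mul, eval_C, eval_pow, eval_X]
    have hck : ∀ k, φ (A ^ k) = c k := fun _ => rfl
    simp only [hck]
    refine Finset.sum_congr rfl fun j _ => ?_
    rw [Finset.mul_sum]
    exact Finset.sum_congr rfl fun i _ => by ring
  have hspec : spectrum ℂ A ⊆ {x | m.IsRoot x} := by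
    intro lam hlam
    by_contra hroot
    have hroot' : m.eval lam ≠ 0 := hroot
    apply spectrum.notMem_iff.mpr _ hlam
    rw [Algebra.algebraMap_eq_smul_one]
    have h1 : (lam • (1:Matrix (Fin n) (Fin n) ℂ) - A) * ((m.eval lam)⁻¹ • B lam) = 1 := by
      rw [mul_smul_comm, key, smul_smul, inv_mul_cancel₀ hroot', one_smul]
    exact ⟨⟨_, _, h1, mul_eq_one_comm.mp h1⟩, rfl⟩
  have hpq : p = q := by
    apply eq_of_infinite_eval_eq
    apply Set.Infinite.mono (s := (spectrum ℂ A)ᶜ)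
    · intro lam hlam
      have hlam' : lam ∉ spectrum ℂ A := hlam
      have hU : IsUnit (lam • (1:Matrix (Fin n) (Fin n) ℂ) - A) := by
        have := spectrum.notMem_iff.mp hlam'
        rwa [Algebra.algebraMap_eq_smul_one] at this
      have hdet : IsUnit (lam • (1:Matrix (Fin n) (Fin n) ℂ) - A).det :=
        (Matrix.isUnit_iff_isUnit_det _).mp hU
      have hinv := Matrix.nonsing_inv_mul _ hdet
      have hBeq : B lam = m.eval lam • (lam • (1:Matrix (Fin n) (Fin n) ℂ) - A)⁻¹ := by
        calc B lam = 1 * B lam := (one_mul _).symm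
        _ = (lam • (1:Matrix (Fin n) (Fin n) ℂ) - A)⁻¹ *
              ((lam • (1:Matrix (Fin n) (Fin n) ℂ) - A) * B lam) := by
            rw [← mul_assoc, hinv]
        _ = m.eval lam • (lam • (1:Matrix (Fin n) (Fin n) ℂ) - A)⁻¹ := by
            rw [key, mul_smul_comm, mul_one]
      show p.eval lam = q.eval lam
      rw [hp lam hlam', hqeval, hBeq, Matrix.smul_mulVec, dotProduct_smul,
        smul_eq_mul]
    · have : ({x | m.IsRoot x}).Finite := finite_setOf_isRoot hm0
      exact Set.Finite.infinite_compl (this.subset hspec)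
  have hcoeff : ∀ k, q.coeff k = ∑ j ∈ Finset.range (l+1),
      if k < j then m.coeff j * c (j-1-k) else 0 := by
    intro k
    rw [hq, finset_sum_coeff]
    refine Finset.sum_congr rfl fun j _ => ?_
    rw [finset_sum_coeff]
    simp only [coeff_C_mul, coeff_X_pow, mul_ite, mul_one, mul_zero]
    rw [Finset.sum_ite_eq (Finset.range j) k fun i => m.coeff j * c (j-1-i)]
    simp [Finset.mem_range]
  set d := l - κ - 1 with hd
  have hcd : q.coeff d = c κ := by
    rw [hcoeff]
    rw [Finset.sum_eq_single l]
    · have h1 : d < l := by omega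
      have h2 : l - 1 - d = κ := by omega
      rw [if_pos h1, h2, hmo.coeff_natDegree, one_mul]
    · intro j hj hjl
      rw [Finset.mem_range] at hj
      split_ifs with h
      · rw [h0c (j-1-d) (by omega), mul_zero]
      · rfl
    · intro h
      exact absurd (Finset.mem_range.mpr (by omega)) h
  have htop : ∀ k, d < k → q.coeff k = 0 := by
    intro k hk
    rw [hcoeff]
    apply Finset.sum_eq_zero
    intro j hj
    rw [Finset.mem_range] at hj
    split_ifs with h
    · rw [h0c (j-1-k) (by omega), mul_zero]
    · rfl
  have hdeg : q.natDegree = d := by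
    refine le_antisymm ?_ (le_natDegree_of_ne_zero (by rw [hcd]; exact hκ0))
    exact natDegree_le_iff_coeff_eq_zero.mpr fun k hk => htop k hk
  constructor
  · rw [hpq, hdeg]
  · show p.leadingCoeff = c κ
    rw [hpq, Polynomial.leadingCoeff, hdeg, hcd]
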